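/- Let θ = 0, and let ε be a complex number satisfying either Re ε > 0 and ε⁻¹ ∉ ℤ, or Re ε = 0 and Im ε > 0. Define f(m,n) = −n(1+εn)/(1+ε(m+n)), g(m,r) = −(m/2+r)(1+2εr)/(1+2ε(m+r)), h(r,m) = −m(1+εm)/(1+2ε(m+r)), all for integer arguments. Suppose ψ: ℤ×ℤ → ℂ and ρ: ℤ×ℤ → ℂ satisfy, for all m,n,r ∈ ℤ: ψ(m,r) = ρ(r,m); (m−n)ψ(m+n,r) = g(n,r)ψ(m,n+r) − g(m,r)ψ(n,m+r); and (m/2−r)ρ(m+r,n) = h(r,n)ψ(m,n+r) − f(m,n)ρ(r,m+n). Then ψ(m,r) = 0 and ρ(r,m) = 0 for all m,r ∈ ℤ. -/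

import Mathlib

/-- f(m,n) = −n(1+εn)/(1+ε(m+n)) -/
noncomputable def vf (ε m n : ℂ) : ℂ := -n * (1 + ε * n) / (1 + ε * (m + n))

/-- g(m,r) = −(m/2+r)(1+2εr)/(1+2ε(m+r)) -/
noncomputable def vg (ε m r : ℂ) : ℂ :=
  -(m / 2 + r) * (1 + 2 * ε * r) / (1 + 2 * ε * (m + r))

/-- h(r,m) = −m(1+εm)/(1+2ε(m+r)) -/
noncomputable def vh (ε r m : ℂ) : ℂ := -m * (1 + ε * m) / (1 + 2 * ε * (m + r))

/-- Case (II) (θ = 0, Ramond) in the proof of Theorem 4.2: if ψ and ρ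
(with all indices in ℤ) satisfy the third line of (4.7) together with (4.9) and
(4.10), then ψ = ρ = 0. -/
theorem psi_rho_vanish_Ramond (ε : ℂ)
    (hε : (0 < ε.re ∧ ∀ k : ℤ, ε⁻¹ ≠ (k : ℂ)) ∨ (ε.re = 0 ∧ 0 < ε.im))
    (ψ ρ : ℤ → ℤ → ℂ)
    (hpr : ∀ m r : ℤ, ψ m r = ρ r m)
    (h9 : ∀ m n r : ℤ,
      ((m : ℂ) - (n : ℂ)) * ψ (m + n) r
        = vg ε n r * ψ m (n + r) - vg ε m r * ψ n (m + r))
    (h10 : ∀ m n r : ℤ,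
      ((m : ℂ) / 2 - (r : ℂ)) * ρ (m + r) n
        = vh ε r n * ψ m (n + r) - vf ε m n * ρ r (m + n)) :
    ∀ m r : ℤ, ψ m r = 0 ∧ ρ r m = 0 := by
  -- nonvanishing of denominators
  have den : ∀ k : ℤ, (1 : ℂ) + ε * k ≠ 0 := by
    intro k
    rcases hε with ⟨hre, hinv⟩ | ⟨hre, him⟩
    · intro h
      have hmul : ε * ((-k : ℤ) : ℂ) = 1 := by push_cast; linear_combination -h
      exact hinv (-k) (inv_eq_of_mul_eq_one_right hmul)
    · intro h
      have := congrArg Complex.re h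
      simp [Complex.add_re, Complex.mul_re, hre] at this
  have den2 : ∀ k : ℤ, (1 : ℂ) + 2 * ε * (k : ℂ) ≠ 0 := by
    intro k
    have := den (2 * k); push_cast at this
    intro h; apply this; linear_combination h
  have den2' : ∀ a b : ℤ, (1 : ℂ) + 2 * ε * ((a : ℂ) + (b : ℂ)) ≠ 0 := by
    intro a b
    have := den2 (a + b); push_cast at this
    intro h; apply this; linear_combination h
  -- Step 1: ψ 0 0 = 0
  have step1 : ψ 0 0 = 0 := by
    have d1 : (1 : ℂ) + -(2 * ε) ≠ 0 := by
      have := den2 (-1); push_cast at this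
      intro h; apply this; linear_combination h
    have e := h9 1 0 (-1)
    simp only [vg] at e
    norm_num at e
    field_simp [d1] at e
    have e2 : ψ 0 0 * ((1 + -(2 * ε)) * 2) = 0 := by linear_combination (2 : ℂ) * e
    rcases mul_eq_zero.mp e2 with h | h
    · exact h
    · exact absurd h (by simp [d1])
  -- Step 2: ψ 0 k = 0 for all k
  have step2 : ∀ k : ℤ, ψ 0 k = 0 := by
    intro k
    rcases eq_or_ne k 0 with rfl | hk
    · exact step1
    have e := h10 0 0 k
    simp only [vh, vf] at e
    norm_num at e
    rw [← hpr 0 k] at e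
    rcases e with e | e
    · exact absurd (by exact_mod_cast e) hk
    · exact e
  -- Step 3: ψ m r = 0 when m + r ≠ 0
  have step3 : ∀ m r : ℤ, m + r ≠ 0 → ψ m r = 0 := by
    intro m r hmr
    have e := h9 m 0 r
    simp only [vg] at e
    norm_num at e
    rw [step2 (m + r)] at e
    have dr := den2 r
    have dmr := den2' m r
    field_simp [dr, dmr] at e
    have e2 : (((m : ℂ) + (r : ℂ)) * ψ m r) * (1 + 2 * ε * (r : ℂ)) = 0 := by
      have e' := e
      rw [mul_div_cancel_left₀ _ (by intro h; apply dr; linear_combination h : (1:ℂ) + (r:ℂ) * 2 * ε ≠ 0)] at e'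
      have e4 : ((m:ℂ) + r) * ψ m r * (2 * (1 + 2 * ε * ((m:ℂ) + r))) = 0 := by linear_combination e'
      rcases mul_eq_zero.mp e4 with h | h
      · rw [h, zero_mul]
      · exact absurd h (mul_ne_zero two_ne_zero dmr)
    have hC : ((m : ℂ) + (r : ℂ)) ≠ 0 := by
      intro h; apply hmr
      exact_mod_cast (by push_cast; linear_combination h : ((m + r : ℤ) : ℂ) = 0)
    have e3 := (mul_eq_zero.mp e2).resolve_right dr
    exact (mul_eq_zero.mp e3).resolve_left hC
  -- Step 4: diagonal ψ m (-m) = 0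
  have step4 : ∀ m : ℤ, ψ m (-m) = 0 := by
    intro m
    rcases eq_or_ne m 0 with rfl | hm
    · exact step1
    have dp := den2 m
    have dn : (1 : ℂ) + -(2 * ε * (m : ℂ)) ≠ 0 := by
      have := den2 (-m); push_cast at this
      intro h; apply this; linear_combination h
    have eE := h9 m (-m) 0
    have eD := h10 m (-m) 0
    simp only [vg, vh, vf] at eE eD
    norm_num at eE eD
    rw [step1] at eE
    rw [← hpr (-m) m, ← hpr 0 0, step1] at eD
    field_simp [dp, dn] at eE eD
    have key : (m : ℂ) * ψ m (-m) * 3 = 0 := by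
      have da : (1 : ℂ) + -((m : ℂ) * 2 * ε) ≠ 0 := by
        intro h; apply dn; linear_combination h
      have db : (1 : ℂ) + (m : ℂ) * 2 * ε ≠ 0 := by
        intro h; apply dp; linear_combination h
      have hA := (div_mul_cancel₀ (ψ m (-m)) da).symm
      have hB := (div_mul_cancel₀ (ψ (-m) m) db).symm
      have hv : ψ (-m) m / (1 + (m : ℂ) * 2 * ε) * 3 = 0 := by
        linear_combination (-1 : ℂ) * hB + eD - 2 * (1 - (m : ℂ) * ε) * eE
      linear_combination (m : ℂ) * 3 * hA - (m : ℂ) * (1 - 2 * (m : ℂ) * ε) * hv - 3 * (m : ℂ) * (1 - 2 * (m : ℂ) * ε) * eE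
    have hm' : (m : ℂ) ≠ 0 := Int.cast_ne_zero.mpr hm
    have := mul_eq_zero.mp key
    rcases this with h | h
    · exact (mul_eq_zero.mp h).resolve_left hm'
    · norm_num at h
  -- conclude
  intro m r
  have hψ : ψ m r = 0 := by
    rcases eq_or_ne (m + r) 0 with h | h
    · have : r = -m := by omega
      rw [this]; exact step4 m
    · exact step3 m r h
  exact ⟨hψ, (hpr m r) ▸ hψ⟩
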